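/- Sink-direction version: for any integer m ≥ 1 and any two-sided sequence c : ℤ → ℤ satisfying c(n+1) + c(n−m) = [c(n)]₊ + [c(n−m+1)]₊ for all n ∈ ℤ, there exists N ∈ ℕ such that for all n ≥ N: c(−n) ≥ c(−n+m) ≥ 0. (The reversed sequence d(n) = c(−n) satisfies a recurrence of the same form, so the eventual positivity and monotonicity hold also in the backward direction of the mutation sequence.) -/

import Mathlib

namespace TropAux

def gg (d : ℤ → ℤ) (x : ℤ) : ℤ := max 0 (d (x + 1)) - d x
def ee (d : ℤ → ℤ) (x : ℤ) : ℤ := max 0 (d x) - d x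

lemma ee_nonneg (d : ℤ → ℤ) (x : ℤ) : 0 ≤ ee d x := by
  simp only [ee, sub_nonneg]; exact le_max_right 0 (d x)

lemma ee_eq_zero (d : ℤ → ℤ) (x : ℤ) (h : ee d x = 0) : 0 ≤ d x := by
  have h1 : (0:ℤ) ≤ max 0 (d x) := le_max_left 0 (d x)
  simp only [ee] at h; linarith

lemma ee_zero (d : ℤ → ℤ) (x : ℤ) (h : 0 ≤ d x) : ee d x = 0 := by
  simp [ee, max_eq_right h]

lemma key (m : ℕ) (d : ℤ → ℤ)
    (hd : ∀ n : ℤ, d (n + 1) + d (n - m) = max 0 (d n) + max 0 (d (n - m + 1)))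
    (y : ℤ) : gg d (y + m) = gg d y + ee d (y + m + 1) + ee d (y + m) := by
  have h := hd (y + m)
  rw [show (y + (m:ℤ) - m : ℤ) = y by ring] at h
  simp only [gg, ee]
  linarith

lemma hfg (m : ℕ) (d : ℤ → ℤ)
    (hd : ∀ n : ℤ, d (n + 1) + d (n - m) = max 0 (d n) + max 0 (d (n - m + 1)))
    (n : ℤ) : d (n + 1) = gg d (n - m) + max 0 (d n) := by
  have h := hd n
  simp only [gg]
  linarith

lemma gmono (m : ℕ) (d : ℤ → ℤ)
    (hd : ∀ n : ℤ, d (n + 1) + d (n - m) = max 0 (d n) + max 0 (d (n - m + 1)))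
    (x : ℤ) (k : ℕ) : gg d x ≤ gg d (x + k * m) := by
  induction k with
  | zero => norm_num
  | succ k ih =>
    have h := key m d hd (x + k * m)
    have e1 := ee_nonneg d (x + k * m + m + 1)
    have e2 := ee_nonneg d (x + k * m + m)
    have harg : x + (((k:ℕ)+1 : ℕ) : ℤ) * m = x + (k:ℤ) * m + m := by push_cast; ring
    rw [harg]
    linarith

def U (m : ℕ) (d : ℤ → ℤ) (n : ℤ) : Prop := ∀ M : ℤ, ∃ k : ℕ, M ≤ gg d (n + k * m)

lemma dinf (m : ℕ) (d : ℤ → ℤ)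
    (hd : ∀ n : ℤ, d (n + 1) + d (n - m) = max 0 (d n) + max 0 (d (n - m + 1)))
    (n : ℤ) (hU : U m d n) (M : ℤ) :
    ∃ K : ℕ, ∀ j : ℕ, K ≤ j → M ≤ d (n + 1 + j * m) := by
  obtain ⟨k, hk⟩ := hU M
  refine ⟨k + 1, fun j hj => ?_⟩
  obtain ⟨t, rfl⟩ : ∃ t : ℕ, j = k + 1 + t := ⟨j - (k + 1), by omega⟩
  have h1 := hfg m d hd (n + ((k:ℤ) + 1 + (t:ℤ)) * m)
  have h2 : n + ((k:ℤ) + 1 + (t:ℤ)) * m - m = n + (k:ℤ) * m + (t:ℤ) * m := by ring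
  rw [h2] at h1
  have h3 := gmono m d hd (n + (k:ℤ) * m) t
  have h4 : (0:ℤ) ≤ max 0 (d (n + ((k:ℤ) + 1 + (t:ℤ)) * m)) := le_max_left _ _
  have h5 : n + 1 + (((k + 1 + t : ℕ)) : ℤ) * m = n + ((k:ℤ) + 1 + (t:ℤ)) * m + 1 := by
    push_cast; ring
  rw [h5]
  linarith

lemma negio (m : ℕ) (d : ℤ → ℤ)
    (hd : ∀ n : ℤ, d (n + 1) + d (n - m) = max 0 (d n) + max 0 (d (n - m + 1)))
    (n : ℤ) (hU : U m d n) (j₀ : ℕ) : ∃ j : ℕ, j₀ ≤ j ∧ d (n + j * m) < 0 := by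
  by_contra hcon
  push_neg at hcon
  obtain ⟨K₀, hK₀⟩ := dinf m d hd n hU 0
  set J := max j₀ K₀ with hJ
  have hconst : ∀ k : ℕ, J ≤ k → gg d (n + k * m) = gg d (n + J * m) := by
    intro k hk
    induction k with
    | zero =>
      have : J = 0 := by omega
      rw [this]
    | succ k ih =>
      rcases Nat.lt_or_ge k J with hlt | hge
      · have : J = k + 1 := by omega
        rw [this]
      · have ih' := ih hge
        have hkey := key m d hd (n + (k:ℤ) * m)
        have he2 : ee d (n + (k:ℤ) * m + m) = 0 := by
          apply ee_zero
          have := hcon (k + 1) (by omega)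
          have harg : n + (((k + 1 : ℕ)) : ℤ) * m = n + (k:ℤ) * m + m := by push_cast; ring
          rwa [harg] at this
        have he1 : ee d (n + (k:ℤ) * m + m + 1) = 0 := by
          apply ee_zero
          have := hK₀ (k + 1) (by omega)
          have harg : n + 1 + (((k + 1 : ℕ)) : ℤ) * m = n + (k:ℤ) * m + m + 1 := by push_cast; ring
          rwa [harg] at this
        have harg2 : n + (((k + 1 : ℕ)) : ℤ) * m = n + (k:ℤ) * m + m := by push_cast; ring
        rw [harg2, hkey, he1, he2, ih']
        ring
  obtain ⟨k, hk⟩ := hU (gg d (n + J * m) + 1)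
  rcases Nat.lt_or_ge k J with hlt | hge
  · have h3 := gmono m d hd (n + (k:ℤ) * m) (J - k)
    have harg : n + (k:ℤ) * m + ((J - k : ℕ) : ℤ) * m = n + (J:ℤ) * m := by
      have : ((J - k : ℕ) : ℤ) = (J:ℤ) - (k:ℤ) := by omega
      rw [this]; ring
    rw [harg] at h3
    linarith
  · have := hconst k hge
    linarith

lemma Ustep (m : ℕ) (d : ℤ → ℤ)
    (hd : ∀ n : ℤ, d (n + 1) + d (n - m) = max 0 (d n) + max 0 (d (n - m + 1)))
    (n : ℤ) (hU : U m d n) : U m d (n - 1) := by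
  have base : ∀ t : ℕ, ∃ k : ℕ, gg d (n - 1) + t ≤ gg d (n - 1 + k * m) := by
    intro t
    induction t with
    | zero => exact ⟨0, by norm_num⟩
    | succ t ih =>
      obtain ⟨k, hk⟩ := ih
      obtain ⟨j, hj, hneg⟩ := negio m d hd n hU (k + 1)
      have hkey := key m d hd (n - 1 + ((j:ℤ) - 1) * m)
      have h1 : n - 1 + ((j:ℤ) - 1) * m + m = n - 1 + (j:ℤ) * m := by ring
      have h2 : n - 1 + ((j:ℤ) - 1) * m + m + 1 = n + (j:ℤ) * m := by ring
      rw [h2, h1] at hkey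
      have hee1 : 1 ≤ ee d (n + (j:ℤ) * m) := by
        have := le_max_left 0 (d (n + (j:ℤ) * m))
        simp only [ee]; linarith
      have hee2 := ee_nonneg d (n - 1 + (j:ℤ) * m)
      have hmon : gg d (n - 1 + (k:ℤ) * m) ≤ gg d (n - 1 + ((j:ℤ) - 1) * m) := by
        have h3 := gmono m d hd (n - 1 + (k:ℤ) * m) (j - 1 - k)
        have harg : n - 1 + (k:ℤ) * m + ((j - 1 - k : ℕ) : ℤ) * m = n - 1 + ((j:ℤ) - 1) * m := by
          have : ((j - 1 - k : ℕ) : ℤ) = (j:ℤ) - 1 - (k:ℤ) := by omega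
          rw [this]; ring
        rwa [harg] at h3
      refine ⟨j, ?_⟩
      push_cast
      linarith
  intro M
  obtain ⟨k, hk⟩ := base (M - gg d (n - 1)).toNat
  refine ⟨k, ?_⟩
  have h := Int.self_le_toNat (M - gg d (n - 1))
  linarith

lemma noU (m : ℕ) (d : ℤ → ℤ)
    (hd : ∀ n : ℤ, d (n + 1) + d (n - m) = max 0 (d n) + max 0 (d (n - m + 1)))
    (n : ℤ) : ¬ U m d n := by
  intro hU
  have hU' := Ustep m d hd n hU
  obtain ⟨K₀, hK₀⟩ := dinf m d hd (n - 1) hU' 0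
  obtain ⟨j, hj, hneg⟩ := negio m d hd n hU K₀
  have h := hK₀ j hj
  rw [show n - 1 + 1 + (j:ℤ) * m = n + (j:ℤ) * m by ring] at h
  linarith


lemma gconst (m : ℕ) (d : ℤ → ℤ)
    (hd : ∀ n : ℤ, d (n + 1) + d (n - m) = max 0 (d n) + max 0 (d (n - m + 1)))
    (n : ℤ) : ∃ K : ℕ, ∀ k : ℕ, K ≤ k → gg d (n + k * m) = gg d (n + K * m) := by
  have h := noU m d hd n
  unfold U at h
  push_neg at h
  obtain ⟨M, hM⟩ := h
  obtain ⟨lub, ⟨⟨K, hK⟩, hub⟩⟩ := Int.exists_greatest_of_bdd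
    (P := fun z => ∃ k : ℕ, gg d (n + k * m) = z)
    ⟨M, fun z hz => by obtain ⟨k, hk⟩ := hz; exact le_of_lt (hk ▸ hM k)⟩
    ⟨gg d (n + (0:ℕ) * m), ⟨0, rfl⟩⟩
  refine ⟨K, fun k hk => ?_⟩
  have hle : gg d (n + (K:ℤ) * m) ≤ gg d (n + (k:ℤ) * m) := by
    have h3 := gmono m d hd (n + (K:ℤ) * m) (k - K)
    have harg : n + (K:ℤ) * m + ((k - K : ℕ) : ℤ) * m = n + (k:ℤ) * m := by
      have : ((k - K : ℕ) : ℤ) = (k:ℤ) - (K:ℤ) := by omega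
      rw [this]; ring
    rwa [harg] at h3
  have hge : gg d (n + (k:ℤ) * m) ≤ lub := hub _ ⟨k, rfl⟩
  omega

lemma dnn (m : ℕ) (d : ℤ → ℤ)
    (hd : ∀ n : ℤ, d (n + 1) + d (n - m) = max 0 (d n) + max 0 (d (n - m + 1)))
    (n : ℤ) : ∃ K : ℕ, ∀ k : ℕ, K ≤ k → 0 ≤ d (n + k * m) := by
  obtain ⟨K, hK⟩ := gconst m d hd n
  refine ⟨K + 1, fun k hk => ?_⟩
  obtain ⟨t, rfl⟩ : ∃ t : ℕ, k = (t + K) + 1 := ⟨k - (K + 1), by omega⟩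
  have h1 := hK (t + K) (by omega)
  have h2 := hK (t + K + 1) (by omega)
  have hkey := key m d hd (n + ((t + K : ℕ) : ℤ) * m)
  have harg : n + ((t + K : ℕ) : ℤ) * m + m = n + ((t + K + 1 : ℕ) : ℤ) * m := by
    push_cast; ring
  rw [harg] at hkey
  rw [h1, h2] at hkey
  have hee1 := ee_nonneg d (n + ((t + K + 1 : ℕ) : ℤ) * m + 1)
  have hee2 := ee_nonneg d (n + ((t + K + 1 : ℕ) : ℤ) * m)
  have : ee d (n + ((t + K + 1 : ℕ) : ℤ) * m) = 0 := by
    -- from hkey after also rewriting the +1 arg? the middle ee arg: n + ↑(t+K)*m + m + 1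
    linarith
  exact ee_eq_zero d _ this

lemma ev_nn (m : ℕ) (d : ℤ → ℤ)
    (hd : ∀ n : ℤ, d (n + 1) + d (n - m) = max 0 (d n) + max 0 (d (n - m + 1)))
    (hm : 1 ≤ m) : ∃ N : ℤ, ∀ n : ℤ, N ≤ n → 0 ≤ d n := by
  classical
  choose Kf hKf using fun r : ℕ => dnn m d hd (r : ℤ)
  set Kmax := (Finset.range m).sup Kf with hKdef
  refine ⟨(m:ℤ) * (Kmax + 1), fun n hn => ?_⟩
  have hm0 : (0:ℤ) < m := by exact_mod_cast hm
  have hr0 : 0 ≤ n % m := Int.emod_nonneg n (by omega)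
  have hrm : n % m < m := Int.emod_lt_of_pos n hm0
  have heq : n % m + m * (n / m) = n := Int.emod_add_mul_ediv n m
  have hKle : Kf (n % m).toNat ≤ Kmax := Finset.le_sup (Finset.mem_range.mpr (by omega))
  have hq' : (Kmax : ℤ) < n / m := by
    have hexp : (m:ℤ) * (Kmax + 1) = m * Kmax + m := by ring
    have h2 : (m:ℤ) * Kmax < m * (n / m) := by linarith
    exact lt_of_mul_lt_mul_left h2 (le_of_lt hm0)
  have hq0 : 0 ≤ n / m := by
    have : (0:ℤ) ≤ (Kmax:ℤ) := Int.natCast_nonneg _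
    linarith
  have happ := hKf (n % m).toNat (n / m).toNat (by omega)
  have harg : (((n % m).toNat : ℤ)) + (((n / m).toNat : ℤ)) * m = n := by
    rw [Int.toNat_of_nonneg hr0, Int.toNat_of_nonneg hq0]
    linear_combination heq
  rw [harg] at happ
  exact happ

theorem aux (m : ℕ) (d : ℤ → ℤ)
    (hd : ∀ n : ℤ, d (n + 1) + d (n - m) = max 0 (d n) + max 0 (d (n - m + 1)))
    (hm : 1 ≤ m) : ∃ N : ℤ, ∀ n : ℤ, N ≤ n → d (n - m) ≤ d n ∧ 0 ≤ d (n - m) := by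
  obtain ⟨N₁, hN₁⟩ := ev_nn m d hd hm
  have hm0 : (0:ℤ) ≤ m := Int.natCast_nonneg m
  have hstep : ∀ n : ℤ, N₁ ≤ n → d (n + 1 + m) - d (n + 1) = d (n + m) - d n := by
    intro n hn
    have hkey := key m d hd n
    have he1 : ee d (n + m + 1) = 0 := ee_zero d _ (hN₁ _ (by linarith))
    have he2 : ee d (n + m) = 0 := ee_zero d _ (hN₁ _ (by linarith))
    rw [he1, he2] at hkey
    have hgg : gg d (n + m) = gg d n := by linarith
    have h1 : max 0 (d (n + 1)) = d (n + 1) := max_eq_right (hN₁ _ (by linarith))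
    have h2 : max 0 (d (n + m + 1)) = d (n + m + 1) := max_eq_right (hN₁ _ (by linarith))
    simp only [gg] at hgg
    rw [h1, h2] at hgg
    rw [show n + 1 + (m:ℤ) = n + m + 1 by ring]
    linarith
  have hDconst : ∀ t : ℕ, d (N₁ + t + m) - d (N₁ + t) = d (N₁ + m) - d N₁ := by
    intro t
    induction t with
    | zero => norm_num
    | succ t ih =>
      have h := hstep (N₁ + t) (by linarith [Int.natCast_nonneg t])
      have e1 : N₁ + ((t + 1 : ℕ) : ℤ) + m = N₁ + (t:ℤ) + 1 + m := by push_cast; ring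
      have e2 : N₁ + ((t + 1 : ℕ) : ℤ) = N₁ + (t:ℤ) + 1 := by push_cast; ring
      rw [e1, e2]
      linarith
  have hDge : 0 ≤ d (N₁ + m) - d N₁ := by
    by_contra hcon
    push_neg at hcon
    have claim : ∀ k : ℕ, d (N₁ + k * m) ≤ d N₁ - k := by
      intro k
      induction k with
      | zero => norm_num
      | succ k ih =>
        have h := hDconst (k * m)
        have e1 : N₁ + ((k * m : ℕ) : ℤ) + m = N₁ + ((k + 1 : ℕ) : ℤ) * m := by push_cast; ring
        have e2 : N₁ + ((k * m : ℕ) : ℤ) = N₁ + (k:ℤ) * m := by push_cast; ring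
        rw [e1, e2] at h
        push_cast at h ⊢
        linarith
    have h := claim ((d N₁).toNat + 1)
    have h0 := hN₁ (N₁ + ((d N₁).toNat + 1 : ℕ) * m)
      (by have : (0:ℤ) ≤ (((d N₁).toNat + 1 : ℕ) : ℤ) * m := by positivity
          linarith)
    omega
  have hmono : ∀ n : ℤ, N₁ ≤ n → d n ≤ d (n + m) := by
    intro n hn
    have ht := hDconst (n - N₁).toNat
    rw [show N₁ + (((n - N₁).toNat : ℕ) : ℤ) = n by omega] at ht
    linarith
  refine ⟨N₁ + m, fun n hn => ?_⟩
  constructor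
  · have h := hmono (n - m) (by omega)
    rwa [sub_add_cancel] at h
  · exact hN₁ (n - m) (by omega)

end TropAux

/-- Sink-direction version: eventual monotone positivity of the tropical coefficient
recurrence in the backward direction of the mutation sequence. -/
theorem tropical_coeff_eventually_nonneg_sink (m : ℕ) (hm : 1 ≤ m) (c : ℤ → ℤ)
    (hrec : ∀ n : ℤ, c (n + 1) + c (n - m) = max 0 (c n) + max 0 (c (n - m + 1))) :
    ∃ N : ℕ, ∀ n : ℕ, N ≤ n → c (-(n : ℤ) + m) ≤ c (-(n : ℤ)) ∧ 0 ≤ c (-(n : ℤ) + m) := by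
  obtain ⟨N, hN⟩ := TropAux.aux m (fun k => c (-k)) (by
    intro n
    have h := hrec ((m:ℤ) - n - 1)
    rw [show ((m:ℤ) - n - 1 - m + 1) = -n by ring] at h
    rw [show ((m:ℤ) - n - 1 - m) = -(n + 1) by ring] at h
    rw [show ((m:ℤ) - n - 1 + 1) = -(n - m) by ring] at h
    rw [show ((m:ℤ) - n - 1) = -(n - m + 1) by ring] at h
    linarith) hm
  refine ⟨N.toNat, fun n hn => ?_⟩
  have h := hN (n : ℤ) (by omega)
  rw [show (-(((n:ℤ)) - m)) = -(n:ℤ) + m by ring] at h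
  exact h
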